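/- For any consecutive denominators q_{i-1}, q_i of the Farey sequence F_Q and any nonnegative integer m, iterating the Farey triangle map gives T^m(q_{i-1}/Q, q_i/Q) = (q_{i+m-1}/Q, q_{i+m}/Q); consequently κ_{m+1}(q_{i-1}/Q, q_i/Q) = ν_2(γ_{i+m}), where κ_1(x,y) = ⌊(1+x)/y⌋ and κ_{m+1} = κ_1 ∘ T^m. -/

import Mathlib

open MeasureTheory

/-- The Farey fractions of order `Q`, as a set of rationals in `(0,1]`
with denominator at most `Q` (rationals are automatically in lowest terms). -/
def fareySet (Q : ℕ) : Set ℚ := {x | 0 < x ∧ x ≤ 1 ∧ x.den ≤ Q}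

/-- `IsFarey Q N p q` asserts that `i ↦ p i / q i` (for `1 ≤ i ≤ N`) enumerates the
Farey fractions of order `Q` in increasing order, in lowest terms, extended to all
integer indices by the periodicity `γ_{i+N} = γ_i + 1`. -/
structure IsFarey (Q N : ℕ) (p q : ℤ → ℤ) : Prop where
  qpos : ∀ i : ℤ, 0 < q i
  coprime : ∀ i : ℤ, Int.gcd (p i) (q i) = 1
  mono : ∀ i j : ℤ, i < j → (p i : ℚ) / (q i) < (p j : ℚ) / (q j)
  mem : ∀ i : ℤ, 1 ≤ i → i ≤ (N : ℤ) → ((p i : ℚ) / (q i)) ∈ fareySet Q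
  surj : ∀ x ∈ fareySet Q, ∃ i : ℤ, 1 ≤ i ∧ i ≤ (N : ℤ) ∧ (p i : ℚ) / (q i) = x
  period_p : ∀ i : ℤ, p (i + N) = p i + q i
  period_q : ∀ i : ℤ, q (i + N) = q i

/-- The `k`-index `ν_k(γ_i) = p_{i+k-1} q_{i-1} - p_{i-1} q_{i+k-1}`. -/
def nuk (p q : ℤ → ℤ) (k : ℕ) (i : ℤ) : ℤ :=
  p (i + k - 1) * q (i - 1) - p (i - 1) * q (i + k - 1)

/-- The Farey triangle `𝒯 = {(x,y) ∈ [0,1]² : x + y > 1}`. -/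
def fareyTriangle : Set (ℝ × ℝ) :=
  {v | v.1 ∈ Set.Icc (0 : ℝ) 1 ∧ v.2 ∈ Set.Icc (0 : ℝ) 1 ∧ 1 < v.1 + v.2}

/-- The Farey triangle map `T(x,y) = (y, ⌊(1+x)/y⌋·y − x)`. -/
noncomputable def Tmap (v : ℝ × ℝ) : ℝ × ℝ :=
  (v.2, (⌊(1 + v.1) / v.2⌋ : ℝ) * v.2 - v.1)

section FareyAux

variable {Q N : ℕ} {p q : ℤ → ℤ}

lemma farey_one_mem (hQ : 1 ≤ Q) : (1 : ℚ) ∈ fareySet Q := by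
  refine ⟨one_pos, le_refl _, ?_⟩
  simpa using hQ

lemma farey_endpoints (hQ : 1 ≤ Q) (hF : IsFarey Q N p q) :
    p N = 1 ∧ q N = 1 ∧ p 0 = 0 ∧ q 0 = 1 ∧ 1 ≤ N := by
  obtain ⟨i0, hi01, hi0N, hv⟩ := hF.surj 1 (farey_one_mem hQ)
  have hN1 : 1 ≤ (N : ℤ) := le_trans hi01 hi0N
  have hi0 : i0 = (N : ℤ) := by
    by_contra h
    have hlt : i0 < (N : ℤ) := lt_of_le_of_ne hi0N h
    have h1 := hF.mono i0 N hlt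
    have h2 := (hF.mem N hN1 le_rfl).2.1
    rw [hv] at h1
    exact absurd h2 (not_le.mpr h1)
  subst hi0
  have hqpos := hF.qpos (N : ℤ)
  have hqne : ((q N : ℚ)) ≠ 0 := by exact_mod_cast hqpos.ne'
  have hpq : p N = q N := by
    field_simp at hv
    exact_mod_cast hv
  have hgcd := hF.coprime (N : ℤ)
  rw [hpq] at hgcd
  rw [Int.gcd_self] at hgcd
  have hq1 : q (N : ℤ) = 1 := by omega
  have hp1 : p (N : ℤ) = 1 := by rw [hpq, hq1]
  have hq0 : q 0 = 1 := by
    have := hF.period_q 0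
    simp only [zero_add] at this
    omega
  have hp0 : p 0 = 0 := by
    have := hF.period_p 0
    simp only [zero_add] at this
    omega
  exact ⟨hp1, hq1, hp0, hq0, by exact_mod_cast hN1⟩

lemma farey_den (hF : IsFarey Q N p q) (j : ℤ) (hj1 : 1 ≤ j) (hjN : j ≤ (N : ℤ)) :
    q j ≤ (Q : ℤ) := by
  have hmem := (hF.mem j hj1 hjN).2.2
  have hden : ((((p j : ℚ)) / (q j)).den : ℤ) = q j :=
    Rat.den_div_eq_of_coprime (hF.qpos j) (hF.coprime j)
  have : (((p j : ℚ) / (q j)).den : ℤ) ≤ (Q : ℤ) := by exact_mod_cast hmem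
  omega

lemma farey_q_le (hQ : 1 ≤ Q) (hF : IsFarey Q N p q) (j : ℤ) (h0 : 0 ≤ j)
    (hjN : j ≤ (N : ℤ)) : q j ≤ (Q : ℤ) := by
  rcases eq_or_lt_of_le h0 with h | h
  · obtain ⟨-, -, -, hq0, -⟩ := farey_endpoints hQ hF
    rw [← h, hq0]
    exact_mod_cast hQ
  · exact farey_den hF j h hjN

lemma farey_neighbor (hQ : 1 ≤ Q) (hF : IsFarey Q N p q) (j : ℤ) (h0 : 0 ≤ j)
    (hjN : j + 1 ≤ (N : ℤ)) :
    p (j + 1) * q j - p j * q (j + 1) = 1 ∧ (Q : ℤ) < q j + q (j + 1) := by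
  obtain ⟨hpN, hqN, hp0, hq0, hN1⟩ := farey_endpoints hQ hF
  have hb : 0 < q j := hF.qpos j
  have hd : 0 < q (j + 1) := hF.qpos (j + 1)
  have hbq : (0 : ℚ) < (q j : ℚ) := by exact_mod_cast hb
  have hdq : (0 : ℚ) < (q (j + 1) : ℚ) := by exact_mod_cast hd
  have hbQ : q j ≤ (Q : ℤ) := farey_q_le hQ hF j h0 (by omega)
  have hdQ : q (j + 1) ≤ (Q : ℤ) := farey_den hF (j + 1) (by omega) hjN
  -- 0 ≤ p j
  have ha0 : 0 ≤ p j := by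
    rcases eq_or_lt_of_le h0 with h | h
    · rw [← h, hp0]
    · have hpos : (0 : ℚ) < (p j : ℚ) / (q j : ℚ) := (hF.mem j h (by omega)).1
      have h2 : (0 : ℚ) < ((p j : ℚ) / (q j : ℚ)) * (q j : ℚ) := mul_pos hpos hbq
      rw [div_mul_cancel₀ _ hbq.ne'] at h2
      exact_mod_cast h2.le
  -- p j < q j
  have hab : p j < q j := by
    have hlt := hF.mono j N (by omega)
    rw [hpN, hqN] at hlt
    have h1 : (p j : ℚ) / (q j : ℚ) < 1 := by simpa using hlt
    have := (div_lt_one hbq).mp h1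
    exact_mod_cast this
  -- Bezout construction
  have hex : ∃ x y : ℤ, x * q j - y * p j = 1 ∧ (Q : ℤ) - q j < y ∧ y ≤ (Q : ℤ) := by
    have hcop := hF.coprime j
    have hbez : (1 : ℤ) = p j * Int.gcdA (p j) (q j) + q j * Int.gcdB (p j) (q j) := by
      have h := Int.gcd_eq_gcd_ab (p j) (q j)
      rw [hcop] at h
      exact_mod_cast h
    obtain ⟨u, v, hbez⟩ : ∃ u v : ℤ, (1 : ℤ) = p j * u + q j * v := ⟨_, _, hbez⟩
    obtain ⟨t, ht1, ht2⟩ : ∃ t : ℤ, (Q : ℤ) + u - q j < t * q j ∧ t * q j ≤ (Q : ℤ) + u := by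
      refine ⟨((Q : ℤ) + u) / q j, ?_, ?_⟩ <;> rw [mul_comm] <;>
        [skip; skip] <;>
        · have h1 := Int.mul_ediv_add_emod ((Q : ℤ) + u) (q j)
          have h2 := Int.emod_nonneg ((Q : ℤ) + u) hb.ne'
          have h3 := Int.emod_lt_of_pos ((Q : ℤ) + u) hb
          linarith
    exact ⟨v + t * p j, -u + t * q j, by linear_combination -hbez,
      by linarith, by linarith⟩
  obtain ⟨x, y, key, hyQb, hyQ⟩ := hex
  have hy1 : 1 ≤ y := by omega
  have hxb : 1 ≤ x * q j := by nlinarith [mul_nonneg (by omega : (0:ℤ) ≤ y) ha0]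
  have hx1 : 1 ≤ x := by
    rcases mul_pos_iff.mp (by omega : 0 < x * q j) with ⟨h, _⟩ | ⟨_, h⟩
    · omega
    · omega
  have hxy : x ≤ y := by
    have hya : y * p j ≤ y * (q j - 1) := by
      apply mul_le_mul_of_nonneg_left (by omega) (by omega)
    have hxyb : x * q j ≤ y * q j := by nlinarith
    exact le_of_mul_le_mul_right hxyb hb
  have hcopxy : Int.gcd x y = 1 := by
    rw [← Int.isCoprime_iff_gcd_eq_one]
    exact ⟨q j, -(p j), by linarith⟩
  have hyq : (0 : ℚ) < (y : ℚ) := by exact_mod_cast hy1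
  -- x/y is a Farey fraction
  have hxmem : ((x : ℚ) / (y : ℚ)) ∈ fareySet Q := by
    refine ⟨div_pos (by exact_mod_cast hx1) hyq, ?_, ?_⟩
    · rw [div_le_one hyq]; exact_mod_cast hxy
    · have hden : ((((x : ℚ)) / (y : ℚ)).den : ℤ) = y :=
        Rat.den_div_eq_of_coprime (by exact_mod_cast hy1) hcopxy
      have : (((x : ℚ) / (y : ℚ)).den : ℤ) ≤ (Q : ℤ) := by omega
      exact_mod_cast this
  obtain ⟨k, hk1, hkN, hkval⟩ := hF.surj _ hxmem
  -- p j / q j < x / y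
  have hax : (p j : ℚ) / (q j : ℚ) < (x : ℚ) / (y : ℚ) := by
    rw [div_lt_div_iff₀ hbq hyq]
    have : p j * y < x * q j := by nlinarith
    exact_mod_cast this
  have hjk : j < k := by
    by_contra h
    push_neg at h
    rcases eq_or_lt_of_le h with h' | h'
    · rw [h'] at hkval; rw [hkval] at hax; exact lt_irrefl _ hax
    · have := hF.mono k j h'
      rw [hkval] at this
      exact absurd hax (not_lt.mpr this.le)
  have hcd_le : (p (j + 1) : ℚ) / (q (j + 1) : ℚ) ≤ (x : ℚ) / (y : ℚ) := by
    rcases eq_or_lt_of_le (by omega : j + 1 ≤ k) with h' | h'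
    · rw [h']; exact le_of_eq hkval
    · have := hF.mono (j + 1) k h'
      rw [hkval] at this
      exact this.le
  rcases eq_or_lt_of_le hcd_le with heq | hlt
  · -- the successor is exactly x/y
    have hcopcd : Nat.Coprime (p (j + 1)).natAbs (q (j + 1)).natAbs := hF.coprime (j + 1)
    have hcopxy' : Nat.Coprime x.natAbs y.natAbs := hcopxy
    obtain ⟨hcx, hdy⟩ :=
      Rat.div_int_inj hd (by exact_mod_cast hy1) hcopcd hcopxy' heq
    constructor
    · rw [hcx, hdy]; linarith
    · omega
  · -- otherwise the successor would have denominator > Q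
    exfalso
    have hn1 : 1 ≤ p (j + 1) * q j - p j * q (j + 1) := by
      have h := hF.mono j (j + 1) (by omega)
      rw [div_lt_div_iff₀ hbq hdq] at h
      have : p j * q (j + 1) < p (j + 1) * q j := by exact_mod_cast h
      omega
    have hn2 : 1 ≤ x * q (j + 1) - p (j + 1) * y := by
      rw [div_lt_div_iff₀ hdq hyq] at hlt
      have : p (j + 1) * y < x * q (j + 1) := by exact_mod_cast hlt
      omega
    have e1 : q j ≤ q j * (x * q (j + 1) - p (j + 1) * y) :=
      le_mul_of_one_le_right hb.le hn2
    have e2 : y ≤ y * (p (j + 1) * q j - p j * q (j + 1)) :=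
      le_mul_of_one_le_right (by omega) hn1
    have e3 : q j * (x * q (j + 1) - p (j + 1) * y) + y * (p (j + 1) * q j - p j * q (j + 1))
        = q (j + 1) * (x * q j - y * p j) := by ring
    have e4 : q (j + 1) * (x * q j - y * p j) = q (j + 1) := by rw [key]; ring
    omega

lemma farey_periodic (hF : IsFarey Q N p q) (t : ℤ) :
    ∀ j : ℤ, q (j + t * N) = q j ∧ p (j + t * N) = p j + t * q j := by
  induction t using Int.induction_on with
  | zero => intro j; simp
  | succ t ih =>
    intro j
    have e : j + ((t : ℤ) + 1) * N = (j + t * N) + N := by ring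
    rw [e, hF.period_q, hF.period_p]
    obtain ⟨hq', hp'⟩ := ih j
    constructor
    · exact hq'
    · rw [hp', hq']; ring
  | pred t ih =>
    intro j
    have e : j + (-(t : ℤ) - 1) * N + N = j + (-(t : ℤ)) * N := by ring
    have hq' := hF.period_q (j + (-(t : ℤ) - 1) * N)
    have hp' := hF.period_p (j + (-(t : ℤ) - 1) * N)
    rw [e] at hq' hp'
    obtain ⟨ihq, ihp⟩ := ih j
    constructor
    · rw [← hq', ihq]
    · have h1 : p (j + (-(t : ℤ) - 1) * N) = p (j + (-(t : ℤ)) * N) - q (j + (-(t : ℤ) - 1) * N) := by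
        omega
      rw [h1, ihp, ← hq', ihq]
      ring

lemma farey_neighbor_all (hQ : 1 ≤ Q) (hF : IsFarey Q N p q) (j : ℤ) :
    p (j + 1) * q j - p j * q (j + 1) = 1 ∧ (Q : ℤ) < q j + q (j + 1) ∧ q j ≤ (Q : ℤ) := by
  obtain ⟨hpN, hqN, hp0, hq0, hN1⟩ := farey_endpoints hQ hF
  have hNpos : (0 : ℤ) < (N : ℤ) := by exact_mod_cast hN1
  have hNz : (N : ℤ) ≠ 0 := hNpos.ne' 
  set j0 : ℤ := j % (N : ℤ) with hj0
  set t : ℤ := j / (N : ℤ) with ht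
  have hj0range : 0 ≤ j0 ∧ j0 < (N : ℤ) := ⟨Int.emod_nonneg j hNz, Int.emod_lt_of_pos j hNpos⟩
  have hdecomp : j = j0 + t * (N : ℤ) := by
    rw [hj0, ht, mul_comm]
    exact (Int.emod_add_mul_ediv j (N : ℤ)).symm
  obtain ⟨hq1, hp1⟩ := farey_periodic hF t j0
  obtain ⟨hq2, hp2⟩ := farey_periodic hF t (j0 + 1)
  have e1 : j0 + t * (N : ℤ) = j := hdecomp.symm
  have e2 : j0 + 1 + t * (N : ℤ) = j + 1 := by omega
  rw [e1] at hq1 hp1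
  rw [e2] at hq2 hp2
  obtain ⟨hD, hsum⟩ := farey_neighbor hQ hF j0 hj0range.1 (by omega)
  have hqle : q j0 ≤ (Q : ℤ) := farey_q_le hQ hF j0 hj0range.1 (by omega)
  refine ⟨?_, by omega, by omega⟩
  rw [hp2, hq1, hp1, hq2]
  linear_combination hD

lemma farey_nu_spec (hQ : 1 ≤ Q) (hF : IsFarey Q N p q) (j : ℤ) :
    ∃ ν : ℤ, q (j + 1) = ν * q j - q (j - 1) ∧ ν * q j ≤ (Q : ℤ) + q (j - 1) ∧
      (Q : ℤ) + q (j - 1) < (ν + 1) * q j := by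
  obtain ⟨hA, hsumA, hleA⟩ := farey_neighbor_all hQ hF (j - 1)
  obtain ⟨hB, hsumB, hleB⟩ := farey_neighbor_all hQ hF j
  have e : j - 1 + 1 = j := by ring
  rw [e] at hA hsumA
  obtain ⟨-, -, hleC⟩ := farey_neighbor_all hQ hF (j + 1)
  -- q j divides q (j+1) + q (j-1)
  have hmul : p j * (q (j + 1) + q (j - 1)) = q j * (p (j + 1) + p (j - 1)) := by
    linear_combination hA - hB
  have hcop : IsCoprime (q j) (p j) := by
    rw [Int.isCoprime_iff_gcd_eq_one, Int.gcd_comm]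
    exact hF.coprime j
  have hdvd : q j ∣ q (j + 1) + q (j - 1) := by
    exact hcop.dvd_of_dvd_mul_left ⟨_, hmul⟩
  obtain ⟨ν, hν⟩ := hdvd
  refine ⟨ν, by rw [mul_comm]; omega, ?_, ?_⟩
  · have : ν * q j = q (j + 1) + q (j - 1) := by rw [mul_comm]; omega
    omega
  · have h1 : (ν + 1) * q j = q (j + 1) + q (j - 1) + q j := by
      rw [add_mul, mul_comm]; omega
    omega

lemma div_div_aux (a b c : ℝ) (hc : 0 < c) (hb : 0 < b) :
    (1 + a / c) / (b / c) = (c + a) / b := by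
  field_simp

lemma farey_Tmap_step (hQ : 1 ≤ Q) (hF : IsFarey Q N p q) (j : ℤ) :
    Tmap ((q (j - 1) : ℝ) / Q, (q j : ℝ) / Q) = ((q j : ℝ) / Q, (q (j + 1) : ℝ) / Q) := by
  obtain ⟨ν, hrec, hlo, hhi⟩ := farey_nu_spec hQ hF j
  have hQr : (0 : ℝ) < Q := by exact_mod_cast hQ
  have hb : (0 : ℝ) < (q j : ℝ) := by exact_mod_cast hF.qpos j
  have harg : (1 + (q (j - 1) : ℝ) / Q) / ((q j : ℝ) / Q)
      = ((Q : ℝ) + (q (j - 1) : ℝ)) / (q j : ℝ) := div_div_aux _ _ _ hQr hb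
  have hfl : ⌊((Q : ℝ) + (q (j - 1) : ℝ)) / (q j : ℝ)⌋ = ν := by
    rw [Int.floor_eq_iff]
    constructor
    · rw [le_div_iff₀ hb]; exact_mod_cast hlo
    · rw [div_lt_iff₀ hb]; push_cast; exact_mod_cast hhi
  have hrecR : (q (j + 1) : ℝ) = (ν : ℝ) * (q j : ℝ) - (q (j - 1) : ℝ) := by
    exact_mod_cast hrec
  unfold Tmap
  dsimp only
  rw [harg, hfl, Prod.mk.injEq]
  refine ⟨rfl, ?_⟩
  rw [hrecR]
  field_simp

end FareyAux

/-- Iterating the Farey triangle map: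
`T^m(q_{i-1}/Q, q_i/Q) = (q_{i+m-1}/Q, q_{i+m}/Q)`, and consequently
`κ_{m+1}(q_{i-1}/Q, q_i/Q) = ν_2(γ_{i+m}) = ⌊(Q + q_{i+m-1})/q_{i+m}⌋`,
where `κ_1(x,y) = ⌊(1+x)/y⌋` and `κ_{m+1} = κ_1 ∘ T^m`. -/
theorem Tmap_iterate_farey (Q N : ℕ) (p q : ℤ → ℤ) (hQ : 1 ≤ Q)
    (hF : IsFarey Q N p q) (i : ℤ) (h1 : 1 ≤ i) (h2 : i ≤ (N : ℤ)) (m : ℕ) :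
    Tmap^[m] ((q (i - 1) : ℝ) / Q, (q i : ℝ) / Q) =
        ((q (i + m - 1) : ℝ) / Q, (q (i + m) : ℝ) / Q) ∧
      ⌊(1 + (Tmap^[m] ((q (i - 1) : ℝ) / Q, (q i : ℝ) / Q)).1) /
          (Tmap^[m] ((q (i - 1) : ℝ) / Q, (q i : ℝ) / Q)).2⌋ =
        ⌊((Q : ℝ) + (q (i + m - 1) : ℝ)) / (q (i + m) : ℝ)⌋ := by
  have hQr : (0 : ℝ) < Q := by exact_mod_cast hQ
  have hiter : ∀ m : ℕ, Tmap^[m] ((q (i - 1) : ℝ) / Q, (q i : ℝ) / Q) =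
      ((q (i + m - 1) : ℝ) / Q, (q (i + m) : ℝ) / Q) := by
    intro m
    induction m with
    | zero => norm_num
    | succ m ih =>
      have e1 : i + ((m + 1 : ℕ) : ℤ) - 1 = i + (m : ℤ) := by push_cast; ring
      have e2 : i + ((m + 1 : ℕ) : ℤ) = i + (m : ℤ) + 1 := by push_cast; ring
      rw [e1, e2, Function.iterate_succ_apply', ih, farey_Tmap_step hQ hF (i + m)]
  refine ⟨hiter m, ?_⟩
  rw [hiter m]
  have hb : (0 : ℝ) < (q (i + m) : ℝ) := by exact_mod_cast hF.qpos (i + m)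
  dsimp only
  rw [div_div_aux _ _ _ hQr hb]
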